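/- Let α, β, γ, δ be linearly independent homogeneous linear forms in S such that f₄ belongs to the ideal intersection (α,β) ∩ (γ,δ). Then there exist homogeneous linear forms m, n, w, t in S such that the determinant of the 3×3 matrix [[0, α, β],[γ, m, n],[δ, w, t]] equals f₄. -/

import Mathlib

open MvPolynomial Matrix TensorProduct

set_option maxHeartbeats 1000000
set_option synthInstance.maxHeartbeats 400000

noncomputable section


lemma deg1_single {σ : Type*} {m : σ →₀ ℕ} (h : m.degree = 1) :
    ∃ j, m = Finsupp.single j 1 := by
  classical
  have hne : m ≠ 0 := by
    intro h0; rw [h0, map_zero] at h; exact one_ne_zero h.symm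
  obtain ⟨j, hj⟩ := Finsupp.ne_iff.mp hne
  simp only [Finsupp.coe_zero, Pi.zero_apply] at hj
  refine ⟨j, ?_⟩
  have hj1 : m j = 1 := le_antisymm (h ▸ Finsupp.le_degree j m) (Nat.one_le_iff_ne_zero.mpr hj)
  ext k
  rcases eq_or_ne k j with rfl | hk
  · rw [Finsupp.single_eq_same, hj1]
  · rw [Finsupp.single_apply_eq_zero.mpr (fun h => absurd h hk)]
    by_contra hmk
    have h2 : 2 ≤ m.degree := by
      have hks : k ∈ m.support := Finsupp.mem_support_iff.mpr hmk
      have hjs : j ∈ m.support := Finsupp.mem_support_iff.mpr hj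
      calc 2 = 1 + 1 := rfl
        _ ≤ m k + m j := Nat.add_le_add (Nat.one_le_iff_ne_zero.mpr hmk) (Nat.one_le_iff_ne_zero.mpr hj)
        _ ≤ ∑ i ∈ m.support, m i := by
            rw [← Finset.sum_pair hk]
            exact Finset.sum_le_sum_of_subset (by intro x hx; simp at hx; rcases hx with rfl|rfl <;> assumption)
        _ = m.degree := rfl
    omega

lemma hom1_eq {K : Type} [Field K] {p : MvPolynomial (Fin 4) K} (hp : p.IsHomogeneous 1) :
    p = ∑ j : Fin 4, C (coeff (Finsupp.single j 1) p) * X j := by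
  ext m
  rw [coeff_sum]
  simp only [coeff_C_mul, coeff_X', mul_ite, mul_one, mul_zero]
  rcases eq_or_ne m.degree 1 with hd | hd
  · obtain ⟨j0, rfl⟩ := deg1_single hd
    rw [Finset.sum_eq_single j0]
    · simp
    · intro b _ hb
      rw [if_neg]
      intro he
      exact hb (by simpa [Finsupp.single_left_inj (one_ne_zero)] using he)
    · simp
  · rw [hp.coeff_eq_zero hd, Finset.sum_eq_zero]
    intro j _
    rw [if_neg]
    intro he
    apply hd
    rw [← he]
    simp [Finsupp.degree_single, Finsupp.support_single_ne_zero]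

lemma hcmul {K : Type} [Field K] (h q : MvPolynomial (Fin 4) K) (d n : ℕ)
    (hh : h.IsHomogeneous d) :
    homogeneousComponent (d + n) (h * q) = h * homogeneousComponent n q := by
  have key : ∀ (s : Finset ℕ) (f : ℕ → MvPolynomial (Fin 4) K),
      (∀ i ∈ s, (f i).IsHomogeneous i) →
      homogeneousComponent (d + n) (h * ∑ i ∈ s, f i)
        = h * (if n ∈ s then f n else 0) := by
    intro s f hf
    rw [Finset.mul_sum, map_sum]
    have : ∀ i ∈ s, homogeneousComponent (d + n) (h * f i)
        = if n = i then h * f i else 0 := by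
      intro i hi
      have hm : h * f i ∈ homogeneousSubmodule (Fin 4) K (d + i) := hh.mul (hf i hi)
      rw [homogeneousComponent_of_mem hm]
      simp [Nat.add_left_cancel_iff]
    rw [Finset.sum_congr rfl this, Finset.sum_ite_eq]
    split_ifs <;> simp
  have hq := sum_homogeneousComponent q
  conv_lhs => rw [← hq]
  rw [key _ _ (fun i _ => homogeneousComponent_isHomogeneous i q)]
  by_cases hn : n ∈ Finset.range (q.totalDegree + 1)
  · rw [if_pos hn]
  · rw [if_neg hn, homogeneousComponent_eq_zero, mul_zero]
    simp only [Finset.mem_range, not_lt] at hn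
    omega

lemma inter_sub {K : Type} [Field K] (p : MvPolynomial (Fin 4) K)
    (h1 : p ∈ Ideal.span {(X 0 : MvPolynomial (Fin 4) K), X 1})
    (h2 : p ∈ Ideal.span {(X 2 : MvPolynomial (Fin 4) K), X 3}) :
    p ∈ Ideal.span {(X 0 * X 2 : MvPolynomial (Fin 4) K), X 0 * X 3, X 1 * X 2, X 1 * X 3} := by
  have e01 : ({(X 0 : MvPolynomial (Fin 4) K), X 1} : Set _) = X '' {0, 1} := by
    simp [Set.image_insert_eq]
  have e23 : ({(X 2 : MvPolynomial (Fin 4) K), X 3} : Set _) = X '' {2, 3} := by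
    simp [Set.image_insert_eq]
  rw [e01, mem_ideal_span_X_image] at h1
  rw [e23, mem_ideal_span_X_image] at h2
  have eX : ∀ i j : Fin 4, (X i * X j : MvPolynomial (Fin 4) K)
      = monomial (Finsupp.single i 1 + Finsupp.single j 1) 1 := by
    intro i j
    rw [X, X, monomial_mul, one_mul]
  have etgt : ({(X 0 * X 2 : MvPolynomial (Fin 4) K), X 0 * X 3, X 1 * X 2, X 1 * X 3} : Set _)
      = (fun s => monomial s (1:K)) ''
        {Finsupp.single 0 1 + Finsupp.single 2 1, Finsupp.single 0 1 + Finsupp.single 3 1,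
         Finsupp.single 1 1 + Finsupp.single 2 1, Finsupp.single 1 1 + Finsupp.single 3 1} := by
    simp only [Set.image_insert_eq, Set.image_singleton, eX]
  rw [etgt, mem_ideal_span_monomial_image]
  intro m hm
  obtain ⟨i, hi, hmi⟩ := h1 m hm
  obtain ⟨j, hj, hmj⟩ := h2 m hm
  have hle : Finsupp.single i 1 + Finsupp.single j 1 ≤ m := by
    intro k
    rcases eq_or_ne k i with rfl | hki
    · have hij : k ≠ j := by
        rcases hi with rfl | rfl <;> rcases hj with rfl | rfl <;> decide
      simp only [Finsupp.add_apply, Finsupp.single_eq_same,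
        Finsupp.single_apply_eq_zero.mpr (fun h => absurd h hij)]
      omega
    · rcases eq_or_ne k j with rfl | hkj
      · simp only [Finsupp.add_apply, Finsupp.single_eq_same,
          Finsupp.single_apply_eq_zero.mpr (fun h => absurd h hki)]
        omega
      · simp only [Finsupp.add_apply,
          Finsupp.single_apply_eq_zero.mpr (fun h => absurd h hki),
          Finsupp.single_apply_eq_zero.mpr (fun h => absurd h hkj)]
        omega
  refine ⟨Finsupp.single i 1 + Finsupp.single j 1, ?_, hle⟩
  rcases hi with rfl | rfl <;> rcases hj with rfl | rfl <;> simp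


lemma comp_X {K : Type} [Field K] (A B : Matrix (Fin 4) (Fin 4) K) (hAB : A * B = 1) (i : Fin 4) :
    (aeval (fun l => ∑ k, C (B l k) * X k) : MvPolynomial (Fin 4) K →ₐ[K] MvPolynomial (Fin 4) K)
      (∑ j, C (A i j) * X j) = X i := by
  rw [map_sum]
  simp only [_root_.map_mul, aeval_C, aeval_X, algebraMap_eq, Finset.mul_sum]
  rw [Finset.sum_comm]
  have hk : ∀ k : Fin 4, (∑ j, C (A i j) * (C (B j k) * X k) : MvPolynomial (Fin 4) K)
      = C ((A * B) i k) * X k := by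
    intro k
    rw [Matrix.mul_apply, map_sum, Finset.sum_mul]
    refine Finset.sum_congr rfl fun j _ => ?_
    rw [_root_.map_mul]; ring
  rw [Finset.sum_congr rfl (fun k _ => hk k), hAB]
  simp [Matrix.one_apply, apply_ite (C (σ := Fin 4) (R := K)), ite_mul, Finset.sum_ite_eq]


/-- The polynomial ring `S = K[Y₁,Y₂,Y₃,Y₄]`. -/
abbrev S (K : Type) [Field K] := MvPolynomial (Fin 4) K

/-- The variables `Y₁,…,Y₄` (indexed by `1,…,4`). -/
def Yv (K : Type) [Field K] : ℕ → S K
  | 1 => X 0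
  | 2 => X 1
  | 3 => X 2
  | 4 => X 3
  | _ => 0

/-- `f₄ = Y₁³+Y₂³+Y₃³+Y₄³`. -/
def f4 (K : Type) [Field K] : S K :=
  Yv K 1 ^ 3 + Yv K 2 ^ 3 + Yv K 3 ^ 3 + Yv K 4 ^ 3

/-- The hypersurface ring `R₄ = S/(f₄)`. -/
abbrev R4 (K : Type) [Field K] := S K ⧸ Ideal.span {f4 K}

/-- The canonical projection `S → R₄`. -/
abbrev proj (K : Type) [Field K] : S K →+* R4 K := Ideal.Quotient.mk (Ideal.span {f4 K})

/-- The `R₄`-linear map `R₄ⁿ → R₄ⁿ` induced by an `n × n` matrix over `S`. -/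
abbrev mbar (K : Type) [Field K] {n : ℕ} (M : Matrix (Fin n) (Fin n) (S K)) :
    (Fin n → R4 K) →ₗ[R4 K] (Fin n → R4 K) :=
  Matrix.mulVecLin (M.map ⇑(proj K))

/-- The cokernel of the `R₄`-linear map induced by a matrix over `S`. -/
abbrev coker (K : Type) [Field K] {n : ℕ} (M : Matrix (Fin n) (Fin n) (S K)) :=
  (Fin n → R4 K) ⧸ LinearMap.range (mbar K M)

/-- The matrix `φ_ij(a,b)`. -/
def phiM (K : Type) [Field K] (a b : K) (i j s : ℕ) : Matrix (Fin 2) (Fin 2) (S K) :=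
  !![Yv K 1 - C a * Yv K s, -(Yv K i ^ 2 + C b * Yv K i * Yv K j + C b ^ 2 * Yv K j ^ 2);
     Yv K i - C b * Yv K j, Yv K 1 ^ 2 + C a * Yv K 1 * Yv K s + C a ^ 2 * Yv K s ^ 2]

/-- The matrix `ψ_ij(a,b)`. -/
def psiM (K : Type) [Field K] (a b : K) (i j s : ℕ) : Matrix (Fin 2) (Fin 2) (S K) :=
  !![Yv K 1 ^ 2 + C a * Yv K 1 * Yv K s + C a ^ 2 * Yv K s ^ 2,
       Yv K i ^ 2 + C b * Yv K i * Yv K j + C b ^ 2 * Yv K j ^ 2;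
     -(Yv K i - C b * Yv K j), Yv K 1 - C a * Yv K s]

/-- The set `𝓛_i` of linear forms `Y_i - a Y_j` with `a³ = -1` and `i < j ≤ 4`. -/
def Lset (K : Type) [Field K] (i : ℕ) : Set (S K) :=
  {p | ∃ (a : K) (j : ℕ), a ^ 3 = -1 ∧ i < j ∧ j ≤ 4 ∧ p = Yv K i - C a * Yv K j}

/-- The matrix `α(b,c,d,ε)`, where `a = ε²bcd`. -/
def alphaM (K : Type) [Field K] (b c d ε : K) : Matrix (Fin 3) (Fin 3) (S K) :=
  let a := ε ^ 2 * b * c * d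
  !![0, Yv K 1 - C a * Yv K 4, Yv K 2 - C b * Yv K 3;
     Yv K 1 - C c * Yv K 2, -(C (b ^ 2) * Yv K 3) - C (a * b * c ^ 2 * ε ^ 2) * Yv K 4,
       C (b ^ 2 * c ^ 2) * Yv K 3 - C (a * b * c * ε ^ 2) * Yv K 4;
     Yv K 3 - C d * Yv K 4, C (c ^ 2) * Yv K 2 + C (b * c ^ 2) * Yv K 3 + C (a * c) * Yv K 4,
       -(Yv K 1) - C c * Yv K 2 - C a * Yv K 4]

/-- The matrix `β(b,c,d,ε)`, the transpose of `α(b,c,d,ε)`. -/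
def betaM (K : Type) [Field K] (b c d ε : K) : Matrix (Fin 3) (Fin 3) (S K) :=
  (alphaM K b c d ε).transpose

/-- The matrix `η(a,b,c,ε)`. -/
def etaM (K : Type) [Field K] (a b c ε : K) : Matrix (Fin 3) (Fin 3) (S K) :=
  !![0, Yv K 1 + Yv K 2, Yv K 3 - C a * Yv K 4;
     Yv K 1 + C ε * Yv K 2, -(Yv K 3) + C c * Yv K 4, 0;
     Yv K 3 - C b * Yv K 4, 0, -(Yv K 1) - C (ε ^ 2) * Yv K 2]

/-- The matrix `θ(a,b,c)` (denoted `ϑ(a,b,c)` in the paper). -/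
def thetaM (K : Type) [Field K] (a b c : K) : Matrix (Fin 3) (Fin 3) (S K) :=
  !![0, Yv K 1 + Yv K 3, Yv K 2 - C a * Yv K 4;
     Yv K 1 - C (a ^ 2 * b) * Yv K 3, -(Yv K 2) + C c * Yv K 4, 0;
     Yv K 2 - C b * Yv K 4, 0, -(Yv K 1) + C (a * b ^ 2) * Yv K 3]

/-- The matrix `D((a,b,c),(p,q,r))`. -/
def DM (K : Type) [Field K] (a b c p q r : K) : Matrix (Fin 3) (Fin 3) (S K) :=
  !![0, Yv K 1 - C a * Yv K 2, Yv K 3 - C p * Yv K 4;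
     Yv K 1 - C c * Yv K 2, -(Yv K 3) + C r * Yv K 4, 0;
     Yv K 3 - C q * Yv K 4, 0, -(Yv K 1) + C b * Yv K 2]

/-- `(a,b,c)` is a permutation (i.e. an enumeration) of the three cube roots of `-1` in `K`. -/
def cubePerm (K : Type) [Field K] (a b c : K) : Prop :=
  a ^ 3 = -1 ∧ b ^ 3 = -1 ∧ c ^ 3 = -1 ∧ a ≠ b ∧ a ≠ c ∧ b ≠ c


theorem stmt8 (K : Type) [Field K] [IsAlgClosed K] [CharZero K]
    (α β γ δ : S K)
    (hα : α.IsHomogeneous 1) (hβ : β.IsHomogeneous 1)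
    (hγ : γ.IsHomogeneous 1) (hδ : δ.IsHomogeneous 1)
    (hind : LinearIndependent K ![α, β, γ, δ])
    (hf : f4 K ∈ Ideal.span {α, β} ⊓ Ideal.span {γ, δ}) :
    ∃ m n w t : S K, m.IsHomogeneous 1 ∧ n.IsHomogeneous 1 ∧
      w.IsHomogeneous 1 ∧ t.IsHomogeneous 1 ∧
      (!![0, α, β; γ, m, n; δ, w, t]).det = f4 K := by
  classical
  set v : Fin 4 → S K := ![α, β, γ, δ] with hv
  have hvhom : ∀ i, (v i).IsHomogeneous 1 := by
    intro i; fin_cases i <;> simpa [hv] using ‹_›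
  set M : Matrix (Fin 4) (Fin 4) K := fun i j => coeff (Finsupp.single j 1) (v i) with hM
  -- rows of M are linearly independent
  let L : S K →ₗ[K] (Fin 4 → K) := LinearMap.pi (fun j => lcoeff K (Finsupp.single j 1))
  have hspan : Submodule.span K (Set.range v) ≤ homogeneousSubmodule (Fin 4) K 1 := by
    rw [Submodule.span_le]
    rintro x ⟨i, rfl⟩
    exact hvhom i
  have hdisj : Disjoint (Submodule.span K (Set.range v)) (LinearMap.ker L) := by
    rw [Submodule.disjoint_def]
    intro x hx hker
    have hxh : x.IsHomogeneous 1 := hspan hx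
    have hc : ∀ j, coeff (Finsupp.single j 1) x = 0 := by
      intro j
      exact congrFun (LinearMap.mem_ker.mp hker) j
    rw [hom1_eq hxh]
    simp [hc]
  have hLI : LinearIndependent K (fun i => M i) := hind.map hdisj
  have hMunit : IsUnit M := Matrix.linearIndependent_rows_iff_isUnit.mp hLI
  set N : Matrix (Fin 4) (Fin 4) K := M⁻¹ with hN
  have hdet : IsUnit M.det := (Matrix.isUnit_iff_isUnit_det M).mp hMunit
  have hMN : M * N = 1 := Matrix.mul_nonsing_inv _ hdet
  have hNM : N * M = 1 := Matrix.nonsing_inv_mul _ hdet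
  set σA : S K →ₐ[K] S K := aeval (fun i => ∑ j, C (M i j) * X j) with hσA
  set ρA : S K →ₐ[K] S K := aeval (fun i => ∑ j, C (N i j) * X j) with hρA
  have hσX : ∀ i, σA (X i) = v i := by
    intro i
    rw [hσA, aeval_X]
    exact (hom1_eq (hvhom i)).symm
  have hρσ : ∀ p : S K, ρA (σA p) = p := by
    have : ρA.comp σA = AlgHom.id K (S K) := by
      apply algHom_ext
      intro i
      show ρA (σA (X i)) = X i
      rw [hσA, aeval_X, hρA]
      exact comp_X M N hMN i
    intro p
    exact congrArg (fun f => DFunLike.coe f p) this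
  have hσρ : ∀ p : S K, σA (ρA p) = p := by
    have : σA.comp ρA = AlgHom.id K (S K) := by
      apply algHom_ext
      intro i
      show σA (ρA (X i)) = X i
      rw [hρA, aeval_X, hσA]
      exact comp_X N M hNM i
    intro p
    exact congrArg (fun f => DFunLike.coe f p) this
  have hρv : ∀ i, ρA (v i) = X i := by
    intro i
    rw [← hσX i, hρσ]
  obtain ⟨hfαβ, hfγδ⟩ := Submodule.mem_inf.mp hf
  rw [Ideal.mem_span_pair] at hfαβ hfγδ
  have h1 : ρA (f4 K) ∈ Ideal.span {(X 0 : S K), X 1} := by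
    obtain ⟨u1, u2, hu⟩ := hfαβ
    rw [Ideal.mem_span_pair]
    refine ⟨ρA u1, ρA u2, ?_⟩
    have hα0 : ρA α = X 0 := by simpa [hv] using hρv 0
    have hβ1 : ρA β = X 1 := by simpa [hv] using hρv 1
    rw [← hu, map_add, _root_.map_mul, _root_.map_mul, hα0, hβ1]
  have h2 : ρA (f4 K) ∈ Ideal.span {(X 2 : S K), X 3} := by
    obtain ⟨u1, u2, hu⟩ := hfγδ
    rw [Ideal.mem_span_pair]
    refine ⟨ρA u1, ρA u2, ?_⟩
    have hγ2 : ρA γ = X 2 := by simpa [hv] using hρv 2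
    have hδ3 : ρA δ = X 3 := by simpa [hv] using hρv 3
    rw [← hu, map_add, _root_.map_mul, _root_.map_mul, hγ2, hδ3]
  have h3 := inter_sub _ h1 h2
  rw [Ideal.mem_span_insert] at h3
  obtain ⟨s1, z1, hz1, he1⟩ := h3
  rw [Ideal.mem_span_insert] at hz1
  obtain ⟨s2, z2, hz2, he2⟩ := hz1
  rw [Ideal.mem_span_insert] at hz2
  obtain ⟨s3, z3, hz3, he3⟩ := hz2
  rw [Ideal.mem_span_singleton] at hz3
  obtain ⟨s4, hs4⟩ := hz3
  have hα' : σA (X 0) = α := by simpa [hv] using hσX 0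
  have hβ' : σA (X 1) = β := by simpa [hv] using hσX 1
  have hγ' : σA (X 2) = γ := by simpa [hv] using hσX 2
  have hδ' : σA (X 3) = δ := by simpa [hv] using hσX 3
  have hE : f4 K = (α * γ) * σA s1 + (α * δ) * σA s2 + (β * γ) * σA s3 + (β * δ) * σA s4 := by
    have := congrArg σA he1
    rw [hσρ, he2, he3, hs4] at this
    rw [this]
    simp only [map_add, _root_.map_mul, hα', hβ', hγ', hδ']
    ring
  set q1 := σA s1; set q2 := σA s2; set q3 := σA s3; set q4 := σA s4
  have hf4hom : (f4 K).IsHomogeneous 3 := by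
    have : f4 K = X 0 ^ 3 + X 1 ^ 3 + X 2 ^ 3 + X 3 ^ 3 := rfl
    rw [this]
    exact (((isHomogeneous_X_pow 0 3).add (isHomogeneous_X_pow 1 3)).add
      (isHomogeneous_X_pow 2 3)).add (isHomogeneous_X_pow 3 3)
  have hcomp3 := congrArg (homogeneousComponent 3) hE
  have e1 : homogeneousComponent 3 ((α * γ) * q1) = (α * γ) * homogeneousComponent 1 q1 :=
    hcmul (α * γ) q1 2 1 (hα.mul hγ)
  have e2 : homogeneousComponent 3 ((α * δ) * q2) = (α * δ) * homogeneousComponent 1 q2 :=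
    hcmul (α * δ) q2 2 1 (hα.mul hδ)
  have e3 : homogeneousComponent 3 ((β * γ) * q3) = (β * γ) * homogeneousComponent 1 q3 :=
    hcmul (β * γ) q3 2 1 (hβ.mul hγ)
  have e4 : homogeneousComponent 3 ((β * δ) * q4) = (β * δ) * homogeneousComponent 1 q4 :=
    hcmul (β * δ) q4 2 1 (hβ.mul hδ)
  rw [map_add, map_add, map_add, e1, e2, e3, e4,
    homogeneousComponent_of_mem hf4hom, if_pos rfl] at hcomp3
  set r1 := homogeneousComponent 1 q1
  set r2 := homogeneousComponent 1 q2
  set r3 := homogeneousComponent 1 q3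
  set r4 := homogeneousComponent 1 q4
  refine ⟨-r4, r2, r3, -r1, (homogeneousComponent_isHomogeneous 1 q4).neg,
    homogeneousComponent_isHomogeneous 1 q2, homogeneousComponent_isHomogeneous 1 q3,
    (homogeneousComponent_isHomogeneous 1 q1).neg, ?_⟩
  rw [Matrix.det_fin_three]
  simp only [Matrix.cons_val', Matrix.cons_val_zero, Matrix.cons_val_one, Matrix.head_cons,
    Matrix.empty_val', Matrix.cons_val_fin_one, Matrix.cons_val_two, Matrix.tail_cons,
    Matrix.head_fin_const, Matrix.of_apply]
  linear_combination -hcomp3
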